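/- Let R → S be a faithfully flat homomorphism of commutative Noetherian rings and J ⊆ I ideals of R. If JS ∩ (IS)ⁿ = (JS)·(IS)ⁿ⁻¹ for all n ≥ 1, then J ∩ Iⁿ = J·Iⁿ⁻¹ for all n ≥ 1. -/

import Mathlib

open TensorProduct in
/-- Faithfully flat descent for ideals: the contraction of the extension of an
ideal along a faithfully flat algebra map is the ideal itself. -/
theorem ff_comap_map_eq {R S : Type*} [CommRing R] [CommRing S] [Algebra R S]
    [fl : Module.FaithfullyFlat R S] (K : Ideal R) :
    (K.map (algebraMap R S)).comap (algebraMap R S) = K := by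
  refine le_antisymm ?_ Ideal.le_comap_map
  intro a ha
  rw [Ideal.mem_comap] at ha
  set x : R ⧸ K := Ideal.Quotient.mk K a with hx
  set I : Ideal R := (Submodule.span R {x}).annihilator with hI
  -- the cyclic submodule generated by `x` is `R ⧸ I`
  let inc : R ⧸ I →ₗ[R] R ⧸ K := Submodule.liftQ _ ((LinearMap.lsmul R (R ⧸ K)).flip x) <| by
    intro r hr
    simpa only [LinearMap.mem_ker, LinearMap.flip_apply, LinearMap.lsmul_apply,
      Submodule.mem_annihilator_span_singleton, hI] using hr
  have injective_inc : Function.Injective inc := by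
    rw [← LinearMap.ker_eq_bot]
    refine eq_bot_iff.2 ?_
    intro r hr
    induction r using Quotient.inductionOn' with | h r =>
    simpa only [Submodule.Quotient.mk''_eq_mk, Submodule.mem_bot, Submodule.Quotient.mk_eq_zero,
      Submodule.mem_annihilator_span_singleton, LinearMap.mem_ker, Submodule.liftQ_apply,
      LinearMap.flip_apply, LinearMap.lsmul_apply, hI, inc] using hr
  -- `x ⊗ 1 = 0` in `(R ⧸ K) ⊗ S` since `algebraMap R S a ∈ K S`
  have hx0 : (x ⊗ₜ (1 : S) : (R ⧸ K) ⊗[R] S) = 0 := by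
    apply (TensorProduct.quotTensorEquivQuotSMul S K).injective
    rw [map_zero, hx, TensorProduct.quotTensorEquivQuotSMul_mk_tmul]
    rw [Submodule.Quotient.mk_eq_zero]
    rw [Ideal.smul_top_eq_map]
    simpa [Algebra.algebraMap_eq_smul_one] using ha
  -- hence `1 ⊗ 1 = 0` in `(R ⧸ I) ⊗ S` by flatness
  have h10 : ((Ideal.Quotient.mk I 1) ⊗ₜ (1 : S) : (R ⧸ I) ⊗[R] S) = 0 := by
    have hinjT : Function.Injective (LinearMap.rTensor S inc) :=
      Module.Flat.rTensor_preserves_injective_linearMap inc injective_inc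
    apply hinjT
    rw [map_zero, LinearMap.rTensor_tmul]
    have : inc (Ideal.Quotient.mk I 1) = x := by
      show Submodule.liftQ _ _ _ (Submodule.Quotient.mk 1) = x
      rw [Submodule.liftQ_apply]
      simp
    rw [this, hx0]
  -- so `1 ∈ I • ⊤`, so `I • ⊤ = ⊤`, so `I = ⊤` by faithful flatness
  have h1top : (1 : S) ∈ (I • (⊤ : Submodule R S)) := by
    have := congrArg (TensorProduct.quotTensorEquivQuotSMul S I) h10
    rw [map_zero, TensorProduct.quotTensorEquivQuotSMul_mk_tmul, one_smul] at this
    exact (Submodule.Quotient.mk_eq_zero _).mp this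
  have htop : I • (⊤ : Submodule R S) = ⊤ := by
    rw [Ideal.smul_top_eq_map] at h1top ⊢
    have : Ideal.map (algebraMap R S) I = ⊤ := Ideal.eq_top_of_isUnit_mem _ h1top isUnit_one
    rw [this]; rfl
  have hItop : I = ⊤ :=
    (Module.FaithfullyFlat.iff_flat_and_ideal_smul_eq_top R S).mp fl |>.2 I htop
  have : (1 : R) ∈ I := hItop ▸ Submodule.mem_top
  rw [hI, Submodule.mem_annihilator_span_singleton, one_smul, hx] at this
  exact Ideal.Quotient.eq_zero_iff_mem.mp this

/-- Aluffi torsion-freeness descends along faithfully flat ring homomorphisms. -/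
theorem aluffi_torsion_free_faithfully_flat_descent {R S : Type*} [CommRing R] [CommRing S]
    [IsNoetherianRing R] [IsNoetherianRing S] [Algebra R S] [Module.FaithfullyFlat R S]
    (J I : Ideal R) (hJI : J ≤ I)
    (h : ∀ n : ℕ, 1 ≤ n →
      (J.map (algebraMap R S)) ⊓ (I.map (algebraMap R S)) ^ n =
        (J.map (algebraMap R S)) * (I.map (algebraMap R S)) ^ (n - 1)) :
    ∀ n : ℕ, 1 ≤ n → J ⊓ I ^ n = J * I ^ (n - 1) := by
  intro n hn
  have easy : J * I ^ (n - 1) ≤ J ⊓ I ^ n := by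
    refine le_inf Ideal.mul_le_left ?_
    calc J * I ^ (n - 1) ≤ I * I ^ (n - 1) := Ideal.mul_mono_left hJI
      _ = I ^ n := by rw [← pow_succ']; congr 1; omega
  refine le_antisymm ?_ easy
  · -- hard direction
    intro a ha
    obtain ⟨haJ, haI⟩ := ha
    have hmem : algebraMap R S a ∈ (J * I ^ (n - 1)).map (algebraMap R S) := by
      rw [Ideal.map_mul, Ideal.map_pow, ← h n hn]
      exact ⟨Ideal.mem_map_of_mem _ haJ, by
        rw [← Ideal.map_pow]; exact Ideal.mem_map_of_mem _ haI⟩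
    have := ff_comap_map_eq (R := R) (S := S) (J * I ^ (n - 1))
    rw [← this]
    exact hmem
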